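/- Let d ≥ 3, n > d, and 2 ≤ k ≤ d, and set r_k = ⌊ n^(d−1) / (n−1)^(2^k − k − 1) ⌋. Then every d-dimensional latin hypercube Q of order n contains at least (d choose k) · n · (n−d)^(2^k − 1) · r_k · (r_k − 1) non-degenerate k-dimensional cuboctahedra. -/

import Mathlib

open Finset Function

open Finset Function

/-- Encoding of a value `v ≠ a` as an element of `Fin (n-1)`. -/
def LHenc {n : ℕ} (hn : 2 ≤ n) (a v : Fin n) : Fin (n - 1) :=
  ⟨if v.val < a.val then v.val else min (v.val - 1) (n - 2), by
    have h1 := v.isLt; have h2 := a.isLt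
    split <;> omega⟩

lemma LHenc_inj {n : ℕ} (hn : 2 ≤ n) (a : Fin n) {v w : Fin n}
    (hv : v ≠ a) (hw : w ≠ a) (h : LHenc hn a v = LHenc hn a w) : v = w := by
  have hv' : v.val ≠ a.val := fun h' => hv (Fin.ext h')
  have hw' : w.val ≠ a.val := fun h' => hw (Fin.ext h')
  have := congrArg Fin.val h
  simp only [LHenc] at this
  have h1 := v.isLt; have h2 := a.isLt; have h3 := w.isLt
  apply Fin.ext
  split_ifs at this <;> omega

lemma pattern_card_le {ι : Type} [Fintype ι] [LinearOrder ι] {n : ℕ} (hn : 2 ≤ n)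
    (V : Finset ((ι → Fin 2) → Fin n))
    (hV : ∀ P ∈ V, ∀ (j : ι → Fin 2) (i : ι), j i ≠ 0 → P (update j i 0) ≠ P j) :
    V.card ≤ n * (n - 1) ^ (2 ^ Fintype.card ι - 1) := by
  classical
  set z : ι → Fin 2 := fun _ => 0 with hz
  have hsupp : ∀ j : ι → Fin 2, j ≠ z → (univ.filter fun i => j i ≠ 0).Nonempty := by
    intro j hj
    rw [filter_nonempty_iff]
    by_contra hc
    push_neg at hc
    exact hj (funext fun i => hc i (mem_univ i))
  -- the injection
  set par : ∀ j : ι → Fin 2, j ≠ z → (ι → Fin 2) :=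
    fun j hj => update j ((univ.filter fun i => j i ≠ 0).min' (hsupp j hj)) 0 with hpar
  have hparmem : ∀ (j : ι → Fin 2) (hj : j ≠ z),
      j ((univ.filter fun i => j i ≠ 0).min' (hsupp j hj)) ≠ 0 := by
    intro j hj
    have := min'_mem (univ.filter fun i => j i ≠ 0) (hsupp j hj)
    exact (mem_filter.mp this).2
  have hparcard : ∀ (j : ι → Fin 2) (hj : j ≠ z),
      (univ.filter fun i => par j hj i ≠ 0).card + 1 = (univ.filter fun i => j i ≠ 0).card := by
    intro j hj
    set i0 := (univ.filter fun i => j i ≠ 0).min' (hsupp j hj) with hi0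
    have he : (univ.filter fun i => par j hj i ≠ 0) = (univ.filter fun i => j i ≠ 0).erase i0 := by
      ext i
      simp only [mem_filter, mem_univ, true_and, mem_erase, hpar]
      by_cases hii : i = i0
      · subst hii; simp [update_self, hi0]
      · rw [hi0] at hii; simp [update_of_ne hii, hii, hi0]
    have hm : i0 ∈ (univ.filter fun i => j i ≠ 0) := min'_mem _ _
    rw [he, card_erase_of_mem hm]
    have : 0 < (univ.filter fun i => j i ≠ 0).card := card_pos.mpr ⟨i0, hm⟩
    omega
  set E : ((ι → Fin 2) → Fin n) → Fin n × ({j : ι → Fin 2 // j ≠ z} → Fin (n - 1)) :=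
    fun P => (P z, fun j => LHenc hn (P (par j.1 j.2)) (P j.1)) with hE
  have hinj : Set.InjOn E ↑V := by
    intro P hP P' hP' hPP'
    have h0 : P z = P' z := congrArg Prod.fst hPP'
    have h1 := congrArg Prod.snd hPP'
    have main : ∀ (m : ℕ) (j : ι → Fin 2), (univ.filter fun i => j i ≠ 0).card ≤ m →
        P j = P' j := by
      intro m
      induction m with
      | zero =>
        intro j hjc
        have : j = z := by
          funext i
          by_contra hc
          have : i ∈ (univ.filter fun i => j i ≠ 0) := by simp; exact hc
          have := card_pos.mpr ⟨i, this⟩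
          omega
        rw [this]; exact h0
      | succ m ih =>
        intro j hjc
        by_cases hjz : j = z
        · rw [hjz]; exact h0
        · have hpc := hparcard j hjz
          have hparval : P (par j hjz) = P' (par j hjz) := ih _ (by omega)
          have h2 := congrFun h1 ⟨j, hjz⟩
          simp only [hE] at h2
          rw [hparval] at h2
          have hne1 : P j ≠ P' (par j hjz) := by
            rw [← hparval]
            exact fun hc => (hV P hP j _ (hparmem j hjz)) hc.symm
          have hne2 : P' j ≠ P' (par j hjz) := by
            exact fun hc => (hV P' hP' j _ (hparmem j hjz)) hc.symm
          exact LHenc_inj hn _ hne1 hne2 h2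
    funext j
    exact main _ j le_rfl
  calc V.card ≤ (univ : Finset (Fin n × ({j : ι → Fin 2 // j ≠ z} → Fin (n - 1)))).card :=
        card_le_card_of_injOn E (fun _ _ => mem_univ _) hinj
    _ = n * (n - 1) ^ (2 ^ Fintype.card ι - 1) := by
        rw [card_univ, Fintype.card_prod, Fintype.card_fin, Fintype.card_fun, Fintype.card_fin]
        congr 2
        rw [Fintype.card_subtype_compl, Fintype.card_subtype_eq, Fintype.card_fun]
        simp
open Finset Function

lemma subcube_card {d n : ℕ} (S : Finset (Fin d)) :
    (univ.filter fun A : Fin d → Fin n × Fin n =>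
      ∀ i, ((A i).1 ≠ (A i).2 ↔ i ∈ S)).card = (n ^ 2 - n) ^ S.card * n ^ (d - S.card) := by
  classical
  have hdiag : Fintype.card {p : Fin n × Fin n // p.1 = p.2} = n := by
    refine (Fintype.card_congr (⟨fun p => p.1.1, fun a => ⟨(a, a), rfl⟩,
      fun ⟨⟨a, b⟩, h⟩ => by cases h; rfl, fun a => rfl⟩ :
        {p : Fin n × Fin n // p.1 = p.2} ≃ Fin n)).trans (Fintype.card_fin n)
  have hne : Fintype.card {p : Fin n × Fin n // p.1 ≠ p.2} = n ^ 2 - n := by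
    rw [Fintype.card_subtype_compl, hdiag, Fintype.card_prod, Fintype.card_fin, sq]
  rw [← Fintype.card_subtype]
  rw [Fintype.card_congr (Equiv.subtypePiEquivPi (p := fun i (p : Fin n × Fin n) =>
    (p.1 ≠ p.2 ↔ i ∈ S)))]
  rw [Fintype.card_pi]
  have hfac : ∀ i : Fin d, Fintype.card {p : Fin n × Fin n // (p.1 ≠ p.2 ↔ i ∈ S)} =
      if i ∈ S then n ^ 2 - n else n := by
    intro i
    by_cases hi : i ∈ S
    · rw [if_pos hi]
      exact (Fintype.card_congr (Equiv.subtypeEquivRight (fun p => by simp [hi]))).trans hne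
    · rw [if_neg hi]
      exact (Fintype.card_congr (Equiv.subtypeEquivRight (fun p => by simp [hi]))).trans hdiag
  simp_rw [hfac]
  rw [← prod_filter_mul_prod_filter_not univ (· ∈ S)]
  rw [prod_congr rfl (fun i hi => if_pos (mem_filter.mp hi).2),
      prod_congr rfl (fun i hi => if_neg (mem_filter.mp hi).2)]
  rw [prod_const, prod_const]
  congr 2
  · simp
  · rw [filter_not]
    rw [card_sdiff_of_subset (by simp)]
    congr 1
    · simp
    · simp

lemma arith_key {T N₁ Nc r S₂ : ℕ} (hCS : T ^ 2 ≤ Nc * S₂) (hN : Nc ≤ N₁)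
    (hT : N₁ * r ≤ T) (hTS : T ≤ S₂) : N₁ * (r * (r - 1)) + T ≤ S₂ := by
  rcases Nat.eq_zero_or_pos N₁ with hN₁ | hN₁
  · simp [hN₁]; omega
  rcases Nat.lt_or_ge r 2 with hr | hr
  · interval_cases r <;> simp <;> omega
  obtain ⟨r', rfl⟩ : ∃ r', r = r' + 1 := ⟨r - 1, by omega⟩
  have key : N₁ * (N₁ * ((r' + 1) * r') + T) ≤ N₁ * S₂ := by
    calc N₁ * (N₁ * ((r' + 1) * r') + T)
        = N₁ * r' * (N₁ * (r' + 1)) + N₁ * T := by ring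
      _ ≤ N₁ * r' * T + N₁ * T := by
          exact Nat.add_le_add_right (Nat.mul_le_mul le_rfl hT) _
      _ = (N₁ * (r' + 1)) * T := by ring
      _ ≤ T * T := Nat.mul_le_mul hT le_rfl
      _ = T ^ 2 := (sq T).symm
      _ ≤ Nc * S₂ := hCS
      _ ≤ N₁ * S₂ := Nat.mul_le_mul hN le_rfl
  have := Nat.le_of_mul_le_mul_left key hN₁
  simpa using this


def IsLatinHypercube {d n : ℕ} (Q : (Fin d → Fin n) → Fin n) : Prop :=
  ∀ (i : Fin d) (x : Fin d → Fin n),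
    Function.Bijective (fun v : Fin n => Q (Function.update x i v))

lemma per_subset_bound {d n k : ℕ} (hn2 : 2 ≤ n) (hk1 : 1 ≤ k) (hkd : k ≤ d) (hd1 : 1 ≤ d)
    (Q : (Fin d → Fin n) → Fin n) (hQ : IsLatinHypercube Q)
    (S : Finset (Fin d)) (hS : S.card = k) :
    n * (n - 1) ^ (2 ^ k - 1) *
      ((n ^ (d - 1) / (n - 1) ^ (2 ^ k - k - 1)) *
       ((n ^ (d - 1) / (n - 1) ^ (2 ^ k - k - 1)) - 1)) ≤
    (((univ.filter fun A : Fin d → Fin n × Fin n => ∀ i, ((A i).1 ≠ (A i).2 ↔ i ∈ S)) ×ˢ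
      (univ.filter fun A : Fin d → Fin n × Fin n => ∀ i, ((A i).1 ≠ (A i).2 ↔ i ∈ S))).filter
      fun p => (fun j : Fin d → Fin 2 => Q fun i => if j i = 0 then (p.1 i).1 else (p.1 i).2) =
        (fun j : Fin d → Fin 2 => Q fun i => if j i = 0 then (p.2 i).1 else (p.2 i).2) ∧
        p.1 ≠ p.2).card := by
  classical
  set F : Finset (Fin d → Fin n × Fin n) :=
    univ.filter (fun A : Fin d → Fin n × Fin n => ∀ i, ((A i).1 ≠ (A i).2 ↔ i ∈ S)) with hFdef
  set Φ : (Fin d → Fin n × Fin n) → ((Fin d → Fin 2) → Fin n) :=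
    fun A j => Q fun i => if j i = 0 then (A i).1 else (A i).2 with hΦ
  set I : Finset ((Fin d → Fin 2) → Fin n) := F.image Φ with hIdef
  set m : ((Fin d → Fin 2) → Fin n) → ℕ := fun P => (F.filter fun A => Φ A = P).card with hm
  have hsum : ∑ P ∈ I, m P = F.card :=
    (card_eq_sum_card_fiberwise fun A hA => mem_image_of_mem Φ hA).symm
  set G : Finset ((Fin d → Fin n × Fin n) × (Fin d → Fin n × Fin n)) :=
    (F ×ˢ F).filter fun p => Φ p.1 = Φ p.2 with hGdef
  have hGcard : G.card = ∑ P ∈ I, m P ^ 2 := by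
    rw [card_eq_sum_card_fiberwise (f := fun p => Φ p.1) (t := I)
      (fun p hp => mem_image_of_mem _ (mem_product.mp (mem_filter.mp hp).1).1)]
    refine sum_congr rfl fun P hP => ?_
    have hfib : G.filter (fun p => Φ p.1 = P) =
        (F.filter fun A => Φ A = P) ×ˢ (F.filter fun A => Φ A = P) := by
      ext p
      simp only [hGdef, mem_filter, mem_product]
      constructor
      · rintro ⟨⟨⟨h1, h2⟩, h3⟩, h4⟩
        exact ⟨⟨h1, h4⟩, h2, h3 ▸ h4⟩
      · rintro ⟨⟨h1, h2⟩, h3, h4⟩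
        exact ⟨⟨⟨h1, h3⟩, h2.trans h4.symm⟩, h2⟩
    rw [hfib, card_product, sq]
  have hdiag : (G.filter fun p => p.1 = p.2).card = F.card := by
    have himg : G.filter (fun p => p.1 = p.2) = F.image (fun A => (A, A)) := by
      ext p
      simp only [hGdef, mem_filter, mem_product, mem_image]
      constructor
      · rintro ⟨⟨⟨h1, h2⟩, h3⟩, h4⟩
        exact ⟨p.1, h1, by rw [Prod.ext_iff]; exact ⟨rfl, h4⟩⟩
      · rintro ⟨c, hc, rfl⟩
        exact ⟨⟨⟨hc, hc⟩, rfl⟩, rfl⟩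
    rw [himg, card_image_of_injective _ (fun a b h => (Prod.ext_iff.mp h).1)]
  have hsplit : F.card + (G.filter fun p => ¬ p.1 = p.2).card = ∑ P ∈ I, m P ^ 2 := by
    rw [← hGcard, ← hdiag]
    exact card_filter_add_card_filter_not _
  have htarget : ((F ×ˢ F).filter fun p => Φ p.1 = Φ p.2 ∧ p.1 ≠ p.2) =
      G.filter fun p => ¬ p.1 = p.2 := by
    rw [hGdef, filter_filter]
  -- numeric quantities
  set N₁ := n * (n - 1) ^ (2 ^ k - 1) with hN₁
  set r := n ^ (d - 1) / (n - 1) ^ (2 ^ k - k - 1) with hrdef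
  have hF : F.card = (n ^ 2 - n) ^ k * n ^ (d - k) := by
    rw [hFdef, subcube_card, hS]
  -- I.card ≤ N₁  (pattern counting)
  have hI : I.card ≤ N₁ := by
    have hcard : Fintype.card {x // x ∈ S} = k := by rw [Fintype.card_coe, hS]
    set ρ : ((Fin d → Fin 2) → Fin n) → (({x // x ∈ S} → Fin 2) → Fin n) :=
      fun P j => P (fun i => if h : i ∈ S then j ⟨i, h⟩ else 0) with hρ
    have hkey : ∀ A ∈ F, ∀ j : Fin d → Fin 2, Φ A j = ρ (Φ A) (fun i => j i.1) := by
      intro A hA j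
      simp only [hΦ, hρ]
      congr 1
      funext i
      by_cases h : i ∈ S
      · simp [h]
      · have hAi : (A i).1 = (A i).2 := by
          have := (mem_filter.mp hA).2 i
          rw [← this] at h
          exact not_not.mp h
        simp [h, hAi]
    have hρinj : Set.InjOn ρ ↑I := by
      intro P hP P' hP' h
      obtain ⟨A, hA, rfl⟩ := mem_image.mp (mem_coe.mp hP)
      obtain ⟨A', hA', rfl⟩ := mem_image.mp (mem_coe.mp hP')
      funext j
      rw [hkey A hA j, hkey A' hA' j, h]
    rw [← card_image_of_injOn hρinj]
    have happ := pattern_card_le (ι := {x // x ∈ S}) hn2 (I.image ρ) ?_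
    · rwa [hcard] at happ
    · intro P hP j i hji
      obtain ⟨P₀, hP₀, rfl⟩ := mem_image.mp hP
      obtain ⟨A, hA, rfl⟩ := mem_image.mp hP₀
      set x : Fin d → Fin n := fun i' =>
        if (if h : i' ∈ S then j ⟨i', h⟩ else 0) = 0 then (A i').1 else (A i').2 with hx
      have hx2 : ρ (Φ A) j = Q x := rfl
      have hxi : x i.1 = (A i.1).2 := by
        simp only [hx]
        simp [i.2, hji]
      have h1 : ρ (Φ A) (update j i 0) = Q (update x i.1 (A i.1).1) := by
        simp only [hρ, hΦ]
        congr 1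
        funext i'
        by_cases hii : i' = i.1
        · subst hii
          simp [i.2]
        · rw [Function.update_of_ne hii]
          have hup : ∀ h : i' ∈ S, update j i 0 ⟨i', h⟩ = j ⟨i', h⟩ :=
            fun h => Function.update_of_ne (fun hc => hii (congrArg Subtype.val hc)) _ _
          simp only [hx]
          by_cases h : i' ∈ S
          · simp [h, hup h]
          · simp [h]
      have hAne : (A i.1).1 ≠ (A i.1).2 := ((mem_filter.mp hA).2 i.1).mpr i.2
      have key2 : ρ (Φ A) (update j i 0) ≠ ρ (Φ A) j := by
        rw [h1, hx2]
        intro hc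
        have hc2 : Q (update x i.1 (A i.1).1) = Q (update x i.1 (x i.1)) := by
          rw [Function.update_eq_self]; exact hc
        have := (hQ i.1 x).injective hc2
        rw [hxi] at this
        exact hAne this
      have hinst : ∀ (i1 i2 : DecidableEq {x // x ∈ S}),
          (@update {x // x ∈ S} (fun _ => Fin 2) i1 j i 0) =
          (@update {x // x ∈ S} (fun _ => Fin 2) i2 j i 0) := by
        intro i1 i2
        congr!
      exact fun hc => key2 ((hinst _ _) ▸ hc)
  -- N₁ * r ≤ F.card
  have hT : N₁ * r ≤ F.card := by
    have e1 : 2 ^ k - 1 = k + (2 ^ k - k - 1) := by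
      have := @Nat.lt_two_pow_self k; omega
    have h2 : n ^ 2 - n = n * (n - 1) := by
      obtain ⟨a, rfl⟩ : ∃ a, n = a + 1 := ⟨n - 1, by omega⟩
      rw [show (a + 1) ^ 2 = (a + 1) * a + (a + 1) from by ring,
        Nat.add_sub_cancel, Nat.add_sub_cancel]
    calc N₁ * r = (n * (n - 1) ^ k) * ((n - 1) ^ (2 ^ k - k - 1) * r) := by
          rw [hN₁, e1, pow_add]; ring
      _ ≤ (n * (n - 1) ^ k) * n ^ (d - 1) := by
          refine Nat.mul_le_mul le_rfl ?_
          rw [hrdef, mul_comm]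
          exact Nat.div_mul_le_self _ _
      _ = F.card := by
          rw [hF, h2, mul_pow]
          have hd' : 1 + (d - 1) = d := by omega
          have hk' : k + (d - k) = d := by omega
          calc n * (n - 1) ^ k * n ^ (d - 1)
              = n ^ (1 + (d - 1)) * (n - 1) ^ k := by rw [pow_add, pow_one]; ring
            _ = n ^ (k + (d - k)) * (n - 1) ^ k := by rw [hd', hk']
            _ = n ^ k * (n - 1) ^ k * n ^ (d - k) := by rw [pow_add]; ring
  have hCS : F.card ^ 2 ≤ I.card * ∑ P ∈ I, m P ^ 2 := by
    have h := sq_sum_le_card_mul_sum_sq (s := I) (f := fun P => (m P : ℤ))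
    rw [← hsum]
    exact_mod_cast h
  have hTS : F.card ≤ ∑ P ∈ I, m P ^ 2 := by
    rw [← hsum]
    exact sum_le_sum fun P _ => Nat.le_self_pow two_ne_zero _
  have hfinal := arith_key hCS hI hT hTS
  rw [htarget]
  omega

/-- `(A, B)` is a cuboctahedron of the hypercube `Q`: the two (possibly degenerate)
subcubes of order 2 determined by the pairs `A i` and `B i` carry the same symbols. -/
def IsCuboct {d n : ℕ} (Q : (Fin d → Fin n) → Fin n)
    (A B : Fin d → Fin n × Fin n) : Prop :=
  ∀ j : Fin d → Fin 2,
    Q (fun i => if j i = 0 then (A i).1 else (A i).2) =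
    Q (fun i => if j i = 0 then (B i).1 else (B i).2)

/-- A cuboctahedron `(A, B)` is `k`-dimensional if the coordinates where `A` (resp. `B`)
has two distinct values coincide and there are exactly `k` of them. -/
def IsKDimCuboct {d n : ℕ} (k : ℕ) (A B : Fin d → Fin n × Fin n) : Prop :=
  {i | (A i).1 ≠ (A i).2} = {i | (B i).1 ≠ (B i).2} ∧
  {i | (A i).1 ≠ (A i).2}.ncard = k

/-- The number of non-degenerate `k`-dimensional cuboctahedra of the hypercube `Q`:
a cuboctahedron `(A, B)` is degenerate if `A = B`, and non-degenerate otherwise. -/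
noncomputable def nondegenKCuboctCount {d n : ℕ}
    (Q : (Fin d → Fin n) → Fin n) (k : ℕ) : ℕ :=
  Set.ncard {p : (Fin d → Fin n × Fin n) × (Fin d → Fin n × Fin n) |
    IsCuboct Q p.1 p.2 ∧ IsKDimCuboct k p.1 p.2 ∧ p.1 ≠ p.2}

/-- For `d ≥ 3`, `n > d` and `2 ≤ k ≤ d`, every `d`-dimensional latin hypercube of
order `n` contains at least `(d choose k) * n * (n - d) ^ (2^k - 1) * r_k * (r_k - 1)`
non-degenerate `k`-dimensional cuboctahedra, where
`r_k = ⌊n ^ (d - 1) / (n - 1) ^ (2^k - k - 1)⌋`. -/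
theorem nondegenKCuboctCount_lower_bound {d n k : ℕ}
    (hd : 3 ≤ d) (hn : d < n) (hk2 : 2 ≤ k) (hkd : k ≤ d)
    (Q : (Fin d → Fin n) → Fin n) (hQ : IsLatinHypercube Q) :
    d.choose k * n * (n - d) ^ (2 ^ k - 1) *
        (n ^ (d - 1) / (n - 1) ^ (2 ^ k - k - 1)) *
        (n ^ (d - 1) / (n - 1) ^ (2 ^ k - k - 1) - 1) ≤
      nondegenKCuboctCount Q k := by
  classical
  have hn2 : 2 ≤ n := by omega
  set 𝒢 := univ.filter (fun p : (Fin d → Fin n × Fin n) × (Fin d → Fin n × Fin n) =>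
    IsCuboct Q p.1 p.2 ∧ IsKDimCuboct k p.1 p.2 ∧ p.1 ≠ p.2) with h𝒢
  have hcount : nondegenKCuboctCount Q k = 𝒢.card := by
    unfold nondegenKCuboctCount
    rw [← Set.ncard_coe_finset]
    congr 1
    ext p
    simp [h𝒢]
  rw [hcount]
  set pairs : Finset (Fin d) → Finset ((Fin d → Fin n × Fin n) × (Fin d → Fin n × Fin n)) :=
    fun S => ((univ.filter fun A : Fin d → Fin n × Fin n => ∀ i, ((A i).1 ≠ (A i).2 ↔ i ∈ S)) ×ˢ
      (univ.filter fun A : Fin d → Fin n × Fin n => ∀ i, ((A i).1 ≠ (A i).2 ↔ i ∈ S))).filter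
      (fun p => (fun j : Fin d → Fin 2 => Q fun i => if j i = 0 then (p.1 i).1 else (p.1 i).2) =
        (fun j : Fin d → Fin 2 => Q fun i => if j i = 0 then (p.2 i).1 else (p.2 i).2) ∧
        p.1 ≠ p.2) with hpairs
  have hmem : ∀ S : Finset (Fin d), ∀ p ∈ pairs S,
      (∀ i, ((p.1 i).1 ≠ (p.1 i).2 ↔ i ∈ S)) ∧ (∀ i, ((p.2 i).1 ≠ (p.2 i).2 ↔ i ∈ S)) ∧
      (fun j : Fin d → Fin 2 => Q fun i => if j i = 0 then (p.1 i).1 else (p.1 i).2) =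
        (fun j : Fin d → Fin 2 => Q fun i => if j i = 0 then (p.2 i).1 else (p.2 i).2) ∧
      p.1 ≠ p.2 := by
    intro S p hp
    rw [hpairs] at hp
    have h1 := mem_filter.mp hp
    have h2 := mem_product.mp h1.1
    exact ⟨(mem_filter.mp h2.1).2, (mem_filter.mp h2.2).2, h1.2.1, h1.2.2⟩
  have hsubset : ∀ S ∈ (univ : Finset (Fin d)).powersetCard k, pairs S ⊆ 𝒢 := by
    intro S hS p hp
    obtain ⟨h1, h2, h3, h4⟩ := hmem S p hp
    have hSk : S.card = k := (mem_powersetCard.mp hS).2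
    refine mem_filter.mpr ⟨mem_univ _, fun j => congrFun h3 j, ⟨?_, ?_⟩, h4⟩
    · ext i
      simp only [Set.mem_setOf_eq]
      rw [h1 i, h2 i]
    · have hset : {i | (p.1 i).1 ≠ (p.1 i).2} = ↑S := by
        ext i
        simp only [Set.mem_setOf_eq, mem_coe]
        exact h1 i
      rw [hset, Set.ncard_coe_finset, hSk]
  have hdisj : ∀ S ∈ (univ : Finset (Fin d)).powersetCard k,
      ∀ S' ∈ (univ : Finset (Fin d)).powersetCard k, S ≠ S' →
      Disjoint (pairs S) (pairs S') := by
    intro S _ S' _ hne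
    rw [disjoint_left]
    intro p hp hp'
    apply hne
    ext i
    rw [← (hmem S p hp).1 i, (hmem S' p hp').1 i]
  calc d.choose k * n * (n - d) ^ (2 ^ k - 1) * (n ^ (d - 1) / (n - 1) ^ (2 ^ k - k - 1)) *
        (n ^ (d - 1) / (n - 1) ^ (2 ^ k - k - 1) - 1)
      = ∑ _S ∈ (univ : Finset (Fin d)).powersetCard k,
          n * (n - d) ^ (2 ^ k - 1) *
          ((n ^ (d - 1) / (n - 1) ^ (2 ^ k - k - 1)) *
           ((n ^ (d - 1) / (n - 1) ^ (2 ^ k - k - 1)) - 1)) := by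
        rw [sum_const, card_powersetCard, card_univ, Fintype.card_fin, smul_eq_mul]
        ring
    _ ≤ ∑ S ∈ (univ : Finset (Fin d)).powersetCard k, (pairs S).card := by
        refine sum_le_sum fun S hS => ?_
        have hSk : S.card = k := (mem_powersetCard.mp hS).2
        refine le_trans ?_ (per_subset_bound hn2 (by omega) hkd (by omega) Q hQ S hSk)
        have hle : (n - d) ^ (2 ^ k - 1) ≤ (n - 1) ^ (2 ^ k - 1) :=
          Nat.pow_le_pow_left (by omega) _
        exact Nat.mul_le_mul (Nat.mul_le_mul le_rfl hle) le_rfl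
    _ = ((univ.powersetCard k).biUnion pairs).card := (card_biUnion hdisj).symm
    _ ≤ 𝒢.card := card_le_card (biUnion_subset.mpr hsubset)
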